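/- Let R be a local commutative ring with residue field of characteristic ≠ 2. Then O₂(R) = { diag(α, α⁻¹) : α ∈ R* } ∪ { antidiag(α⁻¹, α) : α ∈ R* }, where O₂(R) is defined with respect to the form S = [[0,1],[1,0]]. That is, a 2×2 matrix M over R satisfies MᵀSM = S if and only if M = [[α,0],[0,α⁻¹]] or M = [[0,α⁻¹],[α,0]] for some unit α of R. -/
import Mathlib


/-- The split symmetric bilinear form `S = [[0,1],[1,0]]`. -/
def splitForm2 (R : Type*) [CommRing R] : Matrix (Fin 2) (Fin 2) R :=
  !![0, 1; 1, 0]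

theorem orthogonal_group_two_characterization
    {R : Type*} [CommRing R] [IsLocalRing R]
    (hchar : ringChar (IsLocalRing.ResidueField R) ≠ 2)
    (M : Matrix (Fin 2) (Fin 2) R) :
    M.transpose * splitForm2 R * M = splitForm2 R ↔
      ∃ α : Rˣ, M = !![(α : R), 0; 0, ((α⁻¹ : Rˣ) : R)] ∨
        M = !![0, ((α⁻¹ : Rˣ) : R); (α : R), 0] := by
  have h2 : IsUnit (2 : R) := by
    by_contra h
    have hm : (2 : R) ∈ IsLocalRing.maximalIdeal R := h
    have : (2 : IsLocalRing.ResidueField R) = 0 := by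
      have := (IsLocalRing.residue_eq_zero_iff (2 : R)).mpr hm
      rwa [map_ofNat] at this
    exact Ring.two_ne_zero hchar this
  set a := M 0 0 with ha
  set b := M 0 1 with hb
  set c := M 1 0 with hc
  set d := M 1 1 with hd
  constructor
  · intro hM
    have e00 : 2 * (a * c) = 0 := by
      have := congrFun (congrFun hM 0) 0
      simp [splitForm2, Matrix.mul_apply, Fin.sum_univ_two, Matrix.transpose_apply,
        ← ha, ← hb, ← hc, ← hd] at this
      ring_nf
      ring_nf at this
      linear_combination this
    have e11 : 2 * (b * d) = 0 := by
      have := congrFun (congrFun hM 1) 1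
      simp [splitForm2, Matrix.mul_apply, Fin.sum_univ_two, Matrix.transpose_apply,
        ← ha, ← hb, ← hc, ← hd] at this
      linear_combination this
    have e01 : a * d + b * c = 1 := by
      have := congrFun (congrFun hM 0) 1
      simp [splitForm2, Matrix.mul_apply, Fin.sum_univ_two, Matrix.transpose_apply,
        ← ha, ← hb, ← hc, ← hd] at this
      linear_combination this
    have hac : a * c = 0 := by
      rcases h2 with ⟨u, hu⟩
      have := e00
      rw [← hu] at this
      exact (Units.mul_right_eq_zero u).mp this
    have hbd : b * d = 0 := by
      rcases h2 with ⟨u, hu⟩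
      have := e11
      rw [← hu] at this
      exact (Units.mul_right_eq_zero u).mp this
    rcases IsLocalRing.isUnit_or_isUnit_of_isUnit_add (e01 ▸ isUnit_one) with had | hbc
    · have hua : IsUnit a := isUnit_of_mul_isUnit_left had
      have hud : IsUnit d := isUnit_of_mul_isUnit_right had
      have hc0 : c = 0 := by
        rcases hua with ⟨u, hu⟩
        rw [← hu] at hac
        exact (Units.mul_right_eq_zero u).mp hac
      have hb0 : b = 0 := by
        rcases hud with ⟨u, hu⟩
        rw [mul_comm, ← hu] at hbd
        exact (Units.mul_right_eq_zero u).mp hbd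
      have had1 : a * d = 1 := by
        rw [hb0, zero_mul, add_zero] at e01
        exact e01
      refine ⟨⟨a, d, had1, by rw [mul_comm]; exact had1⟩, Or.inl ?_⟩
      ext i j
      fin_cases i <;> fin_cases j <;>
        simp [← ha, ← hb, ← hc, ← hd, hb0, hc0]
    · have huc : IsUnit c := isUnit_of_mul_isUnit_right hbc
      have hub : IsUnit b := isUnit_of_mul_isUnit_left hbc
      have ha0 : a = 0 := by
        rcases huc with ⟨u, hu⟩
        rw [mul_comm, ← hu] at hac
        exact (Units.mul_right_eq_zero u).mp hac
      have hd0 : d = 0 := by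
        rcases hub with ⟨u, hu⟩
        rw [← hu] at hbd
        exact (Units.mul_right_eq_zero u).mp hbd
      have hbc1 : b * c = 1 := by
        rw [ha0, zero_mul, zero_add] at e01
        exact e01
      refine ⟨⟨c, b, by rw [mul_comm]; exact hbc1, hbc1⟩, Or.inr ?_⟩
      ext i j
      fin_cases i <;> fin_cases j <;>
        simp [← ha, ← hb, ← hc, ← hd, ha0, hd0]
  · rintro ⟨α, h | h⟩ <;> subst h <;>
      · ext i j
        fin_cases i <;> fin_cases j <;>
          simp [splitForm2, Matrix.mul_apply, Fin.sum_univ_two, Matrix.transpose_apply,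
            Units.inv_mul, Units.mul_inv, Matrix.vecHead, Matrix.vecTail]
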